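/- The functions A(t) = A₀(1+7R₀²t)^{-1/14}, B(t) = B₀(1+7R₀²t)^{3/14}, C(t) = C₀(1+7R₀²t)^{3/14} with R₀ = -A₀/(2B₀C₀) satisfy: A(t)B(t)C(t) = A₀B₀C₀(1+7R₀²t)^{5/14}, and each sectional curvature K = ±cA/(BC) (c ∈ {1,3}) satisfies K(t)·t^{1/2} bounded as t→∞ with nonzero limit, so the solution is Type III for the cross curvature flow (p = -1). -/
import Mathlib

open Filter Real

/-- For the negative cross curvature flow solution on Nil,
`A(t) = A₀(1+7R₀²t)^{-1/14}`, `B(t) = B₀(1+7R₀²t)^{3/14}`, `C(t) = C₀(1+7R₀²t)^{3/14}`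
with `R₀ = -A₀/(2B₀C₀)`: the product satisfies
`A B C = A₀B₀C₀(1+7R₀²t)^{5/14}`, and the sectional curvatures `±A/(4BC)`, `±3A/(4BC)`
satisfy `t^{1/2} K(t)` bounded with a nonzero limit as `t → ∞`; in particular the
solution is Type III for the cross curvature flow (`p = -1`). -/
theorem nil_xcf_typeIII (A₀ B₀ C₀ : ℝ) (hA : 0 < A₀) (hB : 0 < B₀) (hC : 0 < C₀) :
    let R₀ := -A₀ / (2 * B₀ * C₀)
    let A : ℝ → ℝ := fun t => A₀ * (1 + 7 * R₀ ^ 2 * t) ^ (-(1 / 14) : ℝ)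
    let B : ℝ → ℝ := fun t => B₀ * (1 + 7 * R₀ ^ 2 * t) ^ ((3 / 14) : ℝ)
    let C : ℝ → ℝ := fun t => C₀ * (1 + 7 * R₀ ^ 2 * t) ^ ((3 / 14) : ℝ)
    (∀ t : ℝ, 0 ≤ t →
      A t * B t * C t = A₀ * B₀ * C₀ * (1 + 7 * R₀ ^ 2 * t) ^ ((5 / 14) : ℝ)) ∧
    (∃ L : ℝ, L ≠ 0 ∧
      Tendsto (fun t : ℝ => t ^ ((1 / 2) : ℝ) * (A t / (4 * B t * C t))) atTop (nhds L) ∧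
      Tendsto (fun t : ℝ => t ^ ((1 / 2) : ℝ) * (3 * A t / (4 * B t * C t))) atTop
        (nhds (3 * L))) ∧
    (∃ M : ℝ, ∀ t : ℝ, 0 ≤ t →
      t ^ ((1 / 2) : ℝ) *
        max |A t / (4 * B t * C t)| |3 * A t / (4 * B t * C t)| ≤ M) := by
  intro R₀ A B C
  have hR : R₀ < 0 := div_neg_of_neg_of_pos (neg_neg_of_pos hA) (by positivity)
  set k : ℝ := 7 * R₀ ^ 2 with hkdef
  have hk : 0 < k := by
    have h := pow_two_pos_of_ne_zero hR.ne
    rw [hkdef]; linarith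
  set c : ℝ := A₀ / (4 * B₀ * C₀) with hcdef
  have hc : 0 < c := by positivity
  have hu : ∀ t : ℝ, 0 ≤ t → 0 < 1 + k * t := fun t ht => by positivity
  -- key formula for the curvature
  have hkey : ∀ t : ℝ, 0 ≤ t →
      A t / (4 * B t * C t) = c * (1 + k * t) ^ (-(1 / 2) : ℝ) := by
    intro t ht
    have hut := hu t ht
    have hmul : (1 + k * t) ^ ((3 / 14) : ℝ) * (1 + k * t) ^ ((3 / 14) : ℝ)
        = (1 + k * t) ^ ((3 / 7) : ℝ) := by
      rw [← Real.rpow_add hut]; norm_num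
    have hdiv : (1 + k * t) ^ (-(1 / 14) : ℝ) / (1 + k * t) ^ ((3 / 7) : ℝ)
        = (1 + k * t) ^ (-(1 / 2) : ℝ) := by
      rw [← Real.rpow_sub hut]; norm_num
    have h1 : A t / (4 * B t * C t)
        = (A₀ / (4 * B₀ * C₀)) * ((1 + k * t) ^ (-(1 / 14) : ℝ) /
            ((1 + k * t) ^ ((3 / 14) : ℝ) * (1 + k * t) ^ ((3 / 14) : ℝ))) := by
      simp only [A, B, C, hkdef]
      ring
    rw [h1, hmul, hdiv, hcdef]
  -- the rescaled curvature equals c * (t / (1 + k t)) ^ (1/2) for t ≥ 0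
  have hres : ∀ t : ℝ, 0 ≤ t →
      t ^ ((1 / 2) : ℝ) * (A t / (4 * B t * C t))
        = c * (t / (1 + k * t)) ^ ((1 / 2) : ℝ) := by
    intro t ht
    have hut := hu t ht
    rw [hkey t ht, Real.div_rpow ht hut.le, Real.rpow_neg hut.le, div_eq_mul_inv]
    ring
  -- the base limit
  have hf : Tendsto (fun t : ℝ => t / (1 + k * t)) atTop (nhds (1 / k)) := by
    have h1 : Tendsto (fun t : ℝ => (t⁻¹ + k)⁻¹) atTop (nhds (1 / k)) := by
      have := (tendsto_inv_atTop_zero.add (tendsto_const_nhds (x := k))).inv₀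
        (by simpa using hk.ne')
      simpa using this
    refine h1.congr' ?_
    filter_upwards [eventually_gt_atTop 0] with t ht
    field_simp
  have hg : Tendsto (fun t : ℝ => c * (t / (1 + k * t)) ^ ((1 / 2) : ℝ)) atTop
      (nhds (c * (1 / k) ^ ((1 / 2) : ℝ))) :=
    ((Real.continuousAt_rpow_const _ _ (Or.inl (by positivity))).tendsto.comp
      hf).const_mul c
  refine ⟨?_, ?_, ?_⟩
  · intro t ht
    have hut := hu t ht
    have h1 : A t * B t * C t = A₀ * B₀ * C₀ * ((1 + k * t) ^ (-(1 / 14) : ℝ) *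
        (1 + k * t) ^ ((3 / 14) : ℝ) * (1 + k * t) ^ ((3 / 14) : ℝ)) := by
      simp only [A, B, C, hkdef]; ring
    rw [h1, ← Real.rpow_add hut, ← Real.rpow_add hut]
    norm_num
  · refine ⟨c * (1 / k) ^ ((1 / 2) : ℝ), by positivity, ?_, ?_⟩
    · refine hg.congr' ?_
      filter_upwards [eventually_ge_atTop 0] with t ht
      exact (hres t ht).symm
    · refine (hg.const_mul 3).congr' ?_
      filter_upwards [eventually_ge_atTop 0] with t ht
      have h3 : 3 * A t / (4 * B t * C t) = 3 * (A t / (4 * B t * C t)) := by ring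
      rw [h3, ← hres t ht]; ring
  · refine ⟨3 * c * (1 / k) ^ ((1 / 2) : ℝ), ?_⟩
    intro t ht
    have hut := hu t ht
    have hK : 0 ≤ A t / (4 * B t * C t) := by
      rw [hkey t ht]; positivity
    have h3 : 3 * A t / (4 * B t * C t) = 3 * (A t / (4 * B t * C t)) := by ring
    have habs : max |A t / (4 * B t * C t)| |3 * A t / (4 * B t * C t)|
        = 3 * (A t / (4 * B t * C t)) := by
      rw [h3, abs_of_nonneg hK, abs_of_nonneg (by linarith), max_eq_right (by linarith)]
    have hle : (t / (1 + k * t)) ^ ((1 / 2) : ℝ) ≤ (1 / k) ^ ((1 / 2) : ℝ) := by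
      apply Real.rpow_le_rpow (by positivity) _ (by norm_num)
      rw [div_le_div_iff₀ hut hk]
      nlinarith
    calc t ^ ((1 / 2) : ℝ) *
          max |A t / (4 * B t * C t)| |3 * A t / (4 * B t * C t)|
        = 3 * (t ^ ((1 / 2) : ℝ) * (A t / (4 * B t * C t))) := by rw [habs]; ring
      _ = 3 * (c * (t / (1 + k * t)) ^ ((1 / 2) : ℝ)) := by rw [hres t ht]
      _ ≤ 3 * c * (1 / k) ^ ((1 / 2) : ℝ) := by nlinarith
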